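/- Let t, q be elements of a commutative ring. For every integer k ≥ 1, (1 − t·q)·T_k(t·q, q) = T_k(t, q) + t^2 · q^{2k+1} · T_{k−1}(t, q). -/
import Mathlib


/-- The polynomials `T_k(t,q)` defined by `T_0 = 1` and, for `k ≥ 1`,
`T_k = T_{k-1} + (1+t)(-q)^{k²} + (1-t²) ∑_{i=1}^{k-1} (-q)^{k²-i²} T_{i-1}`
(below the sum is reindexed by `i ↦ i+1`). -/
def T {R : Type*} [CommRing R] (t q : R) : ℕ → R
  | 0 => 1
  | (k+1) => T t q k + (1 + t) * (-q) ^ ((k+1)^2) +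
      (1 - t^2) * ∑ i ∈ (Finset.range k).attach,
        (-q) ^ ((k+1)^2 - (i.1+1)^2) * T t q i.1
decreasing_by
  · exact Nat.lt_succ_self k
  · exact Nat.lt_succ_of_lt (Finset.mem_range.mp i.2)

/-- `f n h` with `f 0 0 = 1`, `f 0 h = 0` for `h ≥ 1`, `f n h = 0` for `h < 0`, and
`f n h = (1-q^h) f (n-1) (h-1) + (1-t q^{h+1}) f (n-1) (h+1)`; at `h = 0` the first
term vanishes since `1 - q^0 = 0`. -/
def f {R : Type*} [CommRing R] (t q : R) : ℕ → ℕ → R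
  | 0, h => if h = 0 then 1 else 0
  | (n+1), 0 => (1 - t * q) * f t q n 1
  | (n+1), (h+1) => (1 - q^(h+1)) * f t q n h + (1 - t * q^(h+2)) * f t q n (h+2)

/-- `Ẽ_n(t,q) = f(2n,0)`, which is `(1-q)^{2n}` times the `(t,q)`-Euler number. -/
def Etilde {R : Type*} [CommRing R] (t q : R) (n : ℕ) : R := f t q (2*n) 0

/-- Binomial coefficient with integer lower index, `0` when the lower index is negative. -/
def binom (n : ℕ) (m : ℤ) : ℤ := if 0 ≤ m then (n.choose m.toNat : ℤ) else 0

/-- q-Pochhammer symbol `(a;q)_n = ∏_{j=0}^{n-1} (1 - a q^j)`. -/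
def qPoch {K : Type*} [CommRing K] (a q : K) (n : ℕ) : K :=
  ∏ j ∈ Finset.range n, (1 - a * q ^ j)

/-- Gaussian binomial coefficient `[n choose k]_q = (q;q)_n / ((q;q)_k (q;q)_{n-k})`,
equal to `0` whenever `k < 0` or `k > n`. -/
def gauss {K : Type*} [Field K] (q : K) (n k : ℤ) : K :=
  if 0 ≤ k ∧ k ≤ n then
    qPoch q q n.toNat / (qPoch q q k.toNat * qPoch q q (n - k).toNat)
  else 0

/-- Number of distinct (positive) part sizes of the partition encoded by an
antitone function `Fin m → Fin (n+1)`. -/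
def distCard {m n : ℕ} (g : Fin m → Fin (n+1)) : ℕ :=
  ((Finset.univ.image fun i => ((g i : ℕ))).erase 0).card

/-- `∑_{λ ⊆ B(m,n)} x^{dist(λ)} q^{|λ|}`: partitions in the `m × n` box are encoded
as antitone functions `Fin m → Fin (n+1)`. -/
def boxSum {R : Type*} [CommRing R] (x q : R) (m n : ℕ) : R :=
  ∑ g ∈ Finset.univ.filter (fun g : Fin m → Fin (n+1) => ∀ i j : Fin m, i ≤ j → g j ≤ g i),
    x ^ distCard g * q ^ (∑ i, (g i : ℕ))

lemma T_unfold {R : Type*} [CommRing R] (t q : R) (k : ℕ) :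
    T t q (k+1) = T t q k + (1 + t) * (-q) ^ ((k+1)^2) +
      (1 - t^2) * ∑ i ∈ Finset.range k, (-q) ^ ((k+1)^2 - (i+1)^2) * T t q i := by
  rw [T, Finset.sum_attach (Finset.range k) (fun i => (-q) ^ ((k+1)^2 - (i+1)^2) * T t q i)]

lemma T_rec {R : Type*} [CommRing R] (t q : R) (k : ℕ) :
    T t q (k+2) = T t q (k+1) - q^(2*k+3) * (T t q (k+1) - t^2 * T t q k) := by
  have hsum : ∑ i ∈ Finset.range (k+1), (-q) ^ ((k+2)^2 - (i+1)^2) * T t q i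
      = (-q)^(2*k+3) * ((∑ i ∈ Finset.range k, (-q) ^ ((k+1)^2 - (i+1)^2) * T t q i)
          + T t q k) := by
    rw [Finset.sum_range_succ, mul_add, Finset.mul_sum]
    congr 1
    · refine Finset.sum_congr rfl fun i hi => ?_
      have hi' : i < k := Finset.mem_range.mp hi
      have h1 : (i+1)^2 ≤ (k+1)^2 := Nat.pow_le_pow_left (by omega) 2
      have h2 : (k+2)^2 = (k+1)^2 + (2*k+3) := by ring
      have h3 : (k+2)^2 - (i+1)^2 = (2*k+3) + ((k+1)^2 - (i+1)^2) := by omega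
      rw [h3, pow_add]
      ring
    · have h3 : (k+2)^2 - (k+1)^2 = 2*k+3 := by
        have h2 : (k+2)^2 = (k+1)^2 + (2*k+3) := by ring
        omega
      rw [h3]
  have hpow : ((-q):R)^((k+2)^2) = (-q)^(2*k+3) * (-q)^((k+1)^2) := by
    rw [← pow_add]
    congr 1
    ring
  have hodd : ((-q):R)^(2*k+3) = -q^(2*k+3) := by
    rw [neg_pow]
    have : (-1 : R)^(2*k+3) = -1 := Odd.neg_one_pow ⟨k+1, by ring⟩
    rw [this]; ring
  rw [T_unfold t q (k+1), hsum, T_unfold t q k, hpow, hodd]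
  ring

theorem stmt_2 {R : Type*} [CommRing R] (t q : R) (k : ℕ) (hk : 1 ≤ k) :
    (1 - t * q) * T (t * q) q k = T t q k + t^2 * q^(2*k+1) * T t q (k-1) := by
  obtain ⟨m, rfl⟩ : ∃ m, k = m + 1 := ⟨k - 1, by omega⟩
  clear hk
  induction m using Nat.twoStepInduction with
  | zero =>
    rw [T_unfold, T_unfold]
    simp [T]
    ring
  | one =>
    rw [show (1:ℕ)+1 = 0+2 by rfl, T_rec, T_rec, T_unfold, T_unfold]
    simp [T]
    ring
  | more n ih1 ih2 =>
    simp only [Nat.add_sub_cancel] at ih1 ih2 ⊢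
    rw [show n+2+1 = (n+1)+2 by ring, T_rec (t*q), T_rec t q (n+1), T_rec t q n]
    linear_combination (1 - q^(2*n+5)) * ih2 + t^2*q^(2*n+7) * ih1 + (1 - q^(2*n+5)) * (T_rec t q n)
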